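/- arXiv:1405.2463 — 3 statements merged into one kernel-verified Lean document; each statement's English description precedes it below -/
import Mathlib

section
/- Let 0 < r₀ < 1, θ₁ < θ₂ with θ₂ − θ₁ < 2π, and let A = { r e^{iθ} : r ∈ [r₀,1], θ ∈ [θ₁,θ₂] }. Suppose f : A → ℂ is such that z ↦ log(f(z)/z) admits an analytic branch L on an open neighborhood of A, |f(z)| = 1 for all z ∈ A with |z| = 1, and |L'(z)| < δ for all z ∈ A, where δ > 0. Then |z|^{1+δ} ≤ |f(z)| ≤ |z|^{1−δ} for all z ∈ A. -/
/-- Sector estimate. On the compact annular sector A = A(r₀,θ₁,θ₂), if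
log(f(z)/z) admits an analytic branch L on a neighborhood of A, |f| = 1 on the outer arc,
and |L'| < δ on A, then |z|^{1+δ} ≤ |f(z)| ≤ |z|^{1−δ} on A. -/
theorem sector_estimate (r₀ θ₁ θ₂ δ : ℝ) (hr0 : 0 < r₀) (hr1 : r₀ < 1)
    (hθ : θ₁ < θ₂) (hθ2 : θ₂ - θ₁ < 2 * Real.pi) (hδ : 0 < δ)
    (A : Set ℂ)
    (hA : A = {z | ∃ r ∈ Set.Icc r₀ 1, ∃ θ ∈ Set.Icc θ₁ θ₂,
      z = (r : ℂ) * Complex.exp ((θ : ℂ) * Complex.I)})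
    (f L : ℂ → ℂ) (U : Set ℂ) (hU : IsOpen U) (hAU : A ⊆ U)
    (hL : DifferentiableOn ℂ L U)
    (hbranch : ∀ z ∈ A, Complex.exp (L z) = f z / z)
    (hbd : ∀ z ∈ A, ‖z‖ = 1 → ‖f z‖ = 1)
    (hder : ∀ z ∈ A, ‖deriv L z‖ < δ) :
    ∀ z ∈ A, ‖z‖ ^ (1 + δ) ≤ ‖f z‖ ∧
      ‖f z‖ ≤ ‖z‖ ^ (1 - δ) := by
  intro z hz
  rw [hA] at hz
  obtain ⟨r, hr, θ, hθm, rfl⟩ := hz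
  have hrpos : 0 < r := lt_of_lt_of_le hr0 hr.1
  have habs_exp : ‖Complex.exp ((θ:ℂ) * Complex.I)‖ = 1 := by
    simp [Complex.norm_exp]
  set z₀ : ℂ := (r:ℂ) * Complex.exp ((θ:ℂ) * Complex.I) with hz₀
  set z₁ : ℂ := Complex.exp ((θ:ℂ) * Complex.I) with hz₁
  have habs0 : ‖z₀‖ = r := by
    rw [hz₀, norm_mul, habs_exp, mul_one, Complex.norm_real, Real.norm_eq_abs, abs_of_pos hrpos]
  have habs1 : ‖z₁‖ = 1 := habs_exp
  have hz₀A : z₀ ∈ A := by rw [hA]; exact ⟨r, hr, θ, hθm, rfl⟩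
  have hz₁A : z₁ ∈ A := by
    rw [hA]; exact ⟨1, ⟨le_of_lt hr1, le_refl 1⟩, θ, hθm, by simp [hz₁]⟩
  have hseg : segment ℝ z₁ z₀ ⊆ A := by
    rintro w ⟨a, b, ha, hb, hab, rfl⟩
    rw [hA]
    refine ⟨a + b * r, ⟨?_, ?_⟩, θ, hθm, ?_⟩
    · nlinarith [hr.1, hr.2]
    · nlinarith [hr.2]
    · rw [hz₀, hz₁, Complex.real_smul, Complex.real_smul]
      push_cast
      ring
  have hmvt : ‖L z₀ - L z₁‖ ≤ δ * (1 - r) := by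
    have key := Convex.norm_image_sub_le_of_norm_hasDerivWithin_le
      (f := L) (f' := deriv L) (C := δ) (s := segment ℝ z₁ z₀)
      (fun x hx => ((hL.differentiableAt
        (hU.mem_nhds (hAU (hseg hx)))).hasDerivAt).hasDerivWithinAt)
      (fun x hx => le_of_lt (hder x (hseg hx)))
      (convex_segment _ _) (left_mem_segment _ _ _) (right_mem_segment _ _ _)
    have hnorm : ‖z₀ - z₁‖ = 1 - r := by
      have h1 : z₀ - z₁ = ((r - 1 : ℝ) : ℂ) * Complex.exp ((θ:ℂ) * Complex.I) := by
        rw [hz₀, hz₁]; push_cast; ring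
      rw [h1]
      rw [norm_mul, habs_exp, mul_one, Complex.norm_real, Real.norm_eq_abs,
        abs_of_nonpos (by linarith [hr.2])]
      ring
    calc ‖L z₀ - L z₁‖ = ‖L z₀ - L z₁‖ := rfl
      _ ≤ δ * ‖z₀ - z₁‖ := key
      _ = δ * (1 - r) := by rw [hnorm]
  have h0 : (L z₁).re = 0 := by
    have h1 : ‖Complex.exp (L z₁)‖ = 1 := by
      rw [hbranch z₁ hz₁A, norm_div, hbd z₁ hz₁A habs1, habs1, div_one]
    rwa [Complex.norm_exp, Real.exp_eq_one_iff] at h1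
  have hre : |(L z₀).re| ≤ δ * (1 - r) := by
    have : |(L z₀ - L z₁).re| ≤ ‖L z₀ - L z₁‖ := Complex.abs_re_le_norm _
    rw [Complex.sub_re, h0, sub_zero] at this
    exact this.trans hmvt
  have hz0ne : z₀ ≠ 0 := by
    intro h; rw [h, norm_zero] at habs0; linarith
  have hf : ‖f z₀‖ = r * Real.exp ((L z₀).re) := by
    have hb := hbranch z₀ hz₀A
    rw [eq_div_iff hz0ne] at hb
    rw [← hb, norm_mul, Complex.norm_exp, habs0, mul_comm]
  have hlog : Real.log r ≤ r - 1 := Real.log_le_sub_one_of_pos hrpos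
  have hre1 : δ * (r - 1) ≤ (L z₀).re := by
    have := abs_le.mp hre; linarith [this.1]
  have hre2 : (L z₀).re ≤ δ * (1 - r) := (abs_le.mp hre).2
  rw [habs0, hf]
  constructor
  · rw [Real.rpow_def_of_pos hrpos]
    have : r * Real.exp ((L z₀).re) = Real.exp (Real.log r + (L z₀).re) := by
      rw [Real.exp_add, Real.exp_log hrpos]
    rw [this]
    apply Real.exp_le_exp.mpr
    nlinarith
  · rw [Real.rpow_def_of_pos hrpos]
    have : r * Real.exp ((L z₀).re) = Real.exp (Real.log r + (L z₀).re) := by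
      rw [Real.exp_add, Real.exp_log hrpos]
    rw [this]
    apply Real.exp_le_exp.mpr
    nlinarith
end

section
/- Suppose a : [0,T]×[0,T] → ℝ is such that t ↦ a(t,τ) is strictly increasing for each τ, and for every ε > 0 there is δ > 0 such that for all 0 ≤ s < t ≤ T with t − s < δ and all τ, τ' with |τ − τ'| < δ: 1 − ε < (a(t,τ) − a(s,τ)) / (a(t,τ') − a(s,τ')) < 1 + ε. If additionally both t ↦ c(t) := lim_{|Z|→0} Σ_l [a(t_{l+1},t_l) − a(t_l,t_l)] and t ↦ a(t,t) are differentiable at t₀ ∈ [0,T], then the limit λ(t₀) := lim_{t→t₀} (a(t,t₀) − a(t₀,t₀))/(t − t₀) exists and equals c'(t₀). -/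
/-- A partition 0 = t₀ < t₁ < ... < t_n = t of [0,t]. -/
structure TimePartition (t : ℝ) where
  n : ℕ
  pts : ℕ → ℝ
  mono : ∀ i, i < n → pts i < pts (i + 1)
  first : pts 0 = 0
  last : pts n = t

/-- The mesh of a partition: the maximal step size. -/
noncomputable def TimePartition.mesh {t : ℝ} (P : TimePartition t) : ℝ :=
  (Finset.range P.n).fold max 0 fun i => P.pts (i + 1) - P.pts i

/-- The telescoping sum S(a,P) = Σ_l [a(t_{l+1},t_l) − a(t_l,t_l)]. -/
noncomputable def psum {t : ℝ} (a : ℝ → ℝ → ℝ) (P : TimePartition t) : ℝ :=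
  ∑ i ∈ Finset.range P.n, (a (P.pts (i + 1)) (P.pts i) - a (P.pts i) (P.pts i))

lemma sum_range_add' (f : ℕ → ℝ) (m n : ℕ) :
    ∑ i ∈ Finset.range (m + n), f i =
      (∑ i ∈ Finset.range m, f i) + ∑ i ∈ Finset.range n, f (m + i) := by
  induction n with
  | zero => simp
  | succ k ih => rw [Nat.add_succ, Finset.sum_range_succ, Finset.sum_range_succ, ih]; ring

lemma mesh_lt {t : ℝ} (P : TimePartition t) {δ : ℝ} (hδ : 0 < δ)
    (h : ∀ i < P.n, P.pts (i + 1) - P.pts i < δ) : P.mesh < δ := by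
  rw [TimePartition.mesh, Finset.fold_max_lt]
  exact ⟨hδ, fun i hi => h i (Finset.mem_range.mp hi)⟩

lemma step_le_mesh {t : ℝ} (P : TimePartition t) {i : ℕ} (hi : i < P.n) :
    P.pts (i + 1) - P.pts i ≤ P.mesh :=
  (Finset.le_fold_max _).mpr (Or.inr ⟨i, Finset.mem_range.mpr hi, le_refl _⟩)

lemma exists_part (u : ℝ) (hu : 0 ≤ u) {δ : ℝ} (hδ : 0 < δ) :
    ∃ P : TimePartition u, P.mesh < δ := by
  rcases eq_or_lt_of_le hu with h | h
  · refine ⟨⟨0, fun _ => 0, by simp, rfl, h⟩, ?_⟩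
    simpa [TimePartition.mesh] using hδ
  · obtain ⟨n, hn⟩ := exists_nat_gt (u / δ)
    have hn0 : 0 < (n : ℝ) := lt_trans (div_pos h hδ) hn
    have hstep : u / n < δ := by
      rw [div_lt_iff₀ hn0]
      rw [div_lt_iff₀ hδ] at hn
      linarith
    have hsn : ∀ i : ℕ, (i + 1 : ℕ) * u / n - i * u / n = u / n := by
      intro i
      rw [div_sub_div_same]
      congr 1
      push_cast; ring
    refine ⟨⟨n, fun i => i * u / n, ?_, by simp, ?_⟩, ?_⟩
    · intro i _
      have : ((i + 1 : ℕ) : ℝ) * u / n - i * u / n = u / n := hsn i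
      have hpos : 0 < u / n := div_pos h hn0
      beta_reduce
      linarith [hsn i]
    · field_simp
    · refine mesh_lt _ hδ fun i _ => ?_
      simp only []
      rw [hsn i]; exact hstep

lemma part_mem {N : ℕ} {q : ℕ → ℝ} (hm : ∀ i < N, q i < q (i + 1)) :
    ∀ i j, i ≤ j → j ≤ N → q i ≤ q j := by
  intro i j hij hjN
  induction j, hij using Nat.le_induction with
  | base => exact le_refl _
  | succ j hij ih =>
    exact le_trans (ih (le_trans (Nat.le_succ j) hjN))
      (hm j (Nat.lt_of_succ_le hjN)).le

lemma concat (a : ℝ → ℝ → ℝ) {u v δ : ℝ} (hδ : 0 < δ) (P : TimePartition u) (hP : P.mesh < δ)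
    (N : ℕ) (q : ℕ → ℝ) (hq0 : q 0 = u) (hqN : q N = v)
    (hqm : ∀ i < N, q i < q (i + 1)) (hstep : ∀ i < N, q (i + 1) - q i < δ) :
    ∃ R : TimePartition v, R.mesh < δ ∧
      psum a R = psum a P + ∑ i ∈ Finset.range N, (a (q (i + 1)) (q i) - a (q i) (q i)) := by
  set f : ℕ → ℝ := fun i => if i ≤ P.n then P.pts i else q (i - P.n) with hf
  have hkey : ∀ i : ℕ, f (P.n + i) = q i := by
    intro i
    rcases Nat.eq_zero_or_pos i with rfl | hi
    · simp [hf, P.last, hq0]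
    · have : ¬ (P.n + i ≤ P.n) := by omega
      simp [hf, this, Nat.add_sub_cancel_left]
  have hfP : ∀ i ≤ P.n, f i = P.pts i := fun i hi => by simp [hf, hi]
  have hmono : ∀ i, i < P.n + N → f i < f (i + 1) := by
    intro i hi
    rcases lt_trichotomy i P.n with h | h | h
    · rw [hfP i h.le, hfP (i + 1) h]
      exact P.mono i h
    · have hN : 0 < N := by omega
      have h1 : f i = q 0 := by rw [h]; simpa using hkey 0
      have h2 : f (i + 1) = q 1 := by rw [h]; simpa using hkey 1
      rw [h1, h2]; exact hqm 0 hN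
    · have h1 : f i = q (i - P.n) := by
        have := hkey (i - P.n); rwa [Nat.add_sub_cancel' h.le] at this
      have h2 : f (i + 1) = q (i - P.n + 1) := by
        have := hkey (i - P.n + 1)
        rwa [show P.n + (i - P.n + 1) = i + 1 by omega] at this
      rw [h1, h2]
      exact hqm (i - P.n) (by omega)
  refine ⟨⟨P.n + N, f, hmono, by simpa [hf] using P.first, ?_⟩, ?_, ?_⟩
  · rw [hkey N, hqN]
  · refine mesh_lt _ hδ fun i hi => ?_
    simp only [] at hi ⊢
    rcases lt_trichotomy i P.n with h | h | h
    · rw [hfP i h.le, hfP (i + 1) h]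
      exact lt_of_le_of_lt (step_le_mesh P h) hP
    · have hN : 0 < N := by omega
      have h1 : f i = q 0 := by rw [h]; simpa using hkey 0
      have h2 : f (i + 1) = q 1 := by rw [h]; simpa using hkey 1
      rw [h1, h2]; exact hstep 0 hN
    · have h1 : f i = q (i - P.n) := by
        have := hkey (i - P.n); rwa [Nat.add_sub_cancel' h.le] at this
      have h2 : f (i + 1) = q (i - P.n + 1) := by
        have := hkey (i - P.n + 1)
        rwa [show P.n + (i - P.n + 1) = i + 1 by omega] at this
      rw [h1, h2]
      exact hstep (i - P.n) (by omega)
  · show (∑ i ∈ Finset.range (P.n + N), (a (f (i + 1)) (f i) - a (f i) (f i))) = _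
    rw [sum_range_add']
    congr 1
    · exact Finset.sum_congr rfl fun i hi => by
        have hi' := Finset.mem_range.mp hi
        rw [hfP i hi'.le, hfP (i + 1) hi']
    · exact Finset.sum_congr rfl fun i _ => by
        rw [show P.n + i + 1 = P.n + (i + 1) by ring, hkey i, hkey (i + 1)]

lemma fine_sum_exists (T : ℝ) (a : ℝ → ℝ → ℝ) (c : ℝ → ℝ)
    (hc : ∀ t ∈ Set.Icc 0 T, ∀ ε > 0, ∃ δ > 0, ∀ P : TimePartition t,
      P.mesh < δ → |psum a P - c t| < ε)
    {u v : ℝ} (hu : 0 ≤ u) (huv : u < v) (hv : v ≤ T) {η δ' : ℝ} (hη : 0 < η) (hδ' : 0 < δ') :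
    ∃ (N : ℕ) (q : ℕ → ℝ), q 0 = u ∧ q N = v ∧ (∀ i < N, q i < q (i + 1)) ∧
      (∀ i < N, q (i + 1) - q i < δ') ∧
      |(∑ i ∈ Finset.range N, (a (q (i + 1)) (q i) - a (q i) (q i))) - (c v - c u)| < η := by
  obtain ⟨δu, hδu, Hu⟩ := hc u ⟨hu, le_trans huv.le hv⟩ (η / 2) (by linarith)
  obtain ⟨δv, hδv, Hv⟩ := hc v ⟨le_trans hu huv.le, hv⟩ (η / 2) (by linarith)
  set δ₀ := min δ' (min δu δv) with hδ₀def
  have hδ₀ : 0 < δ₀ := lt_min hδ' (lt_min hδu hδv)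
  obtain ⟨P, hP⟩ := exists_part u hu hδ₀
  obtain ⟨n, hn⟩ := exists_nat_gt ((v - u) / δ₀)
  have hvu : 0 < v - u := by linarith
  have hn0 : 0 < (n : ℝ) := lt_trans (div_pos hvu hδ₀) hn
  have hn0' : (n : ℝ) ≠ 0 := ne_of_gt hn0
  set q : ℕ → ℝ := fun i => u + i * (v - u) / n with hq
  have hstep : ∀ i : ℕ, q (i + 1) - q i = (v - u) / n := by
    intro i; simp only [hq]; push_cast; ring
  have hsδ : (v - u) / n < δ₀ := by
    rw [div_lt_iff₀ hn0]; rw [div_lt_iff₀ hδ₀] at hn; linarith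
  have hq0 : q 0 = u := by simp [hq]
  have hqN : q n = v := by simp only [hq]; field_simp; ring
  have hqm : ∀ i < n, q i < q (i + 1) := fun i _ => by
    rw [← sub_pos, hstep i]
    exact div_pos hvu hn0
  have hqs : ∀ i < n, q (i + 1) - q i < δ₀ := fun i _ => by rw [hstep i]; exact hsδ
  obtain ⟨R, hRm, hRs⟩ := concat a hδ₀ P hP n q hq0 hqN hqm hqs
  refine ⟨n, q, hq0, hqN, hqm, fun i hi => lt_of_lt_of_le (hqs i hi) (min_le_left _ _), ?_⟩
  have h1 := Hu P (lt_of_lt_of_le hP (le_trans (min_le_right _ _) (min_le_left _ _)))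
  have h2 := Hv R (lt_of_lt_of_le hRm (le_trans (min_le_right _ _) (min_le_right _ _)))
  have hSS : (∑ i ∈ Finset.range n, (a (q (i + 1)) (q i) - a (q i) (q i)))
      = psum a R - psum a P := by rw [hRs]; ring
  rw [hSS]
  rw [abs_lt] at h1 h2 ⊢
  constructor <;> linarith

lemma key_estimate (T : ℝ) (a : ℝ → ℝ → ℝ) (c : ℝ → ℝ) (t₀ : ℝ) (ht₀ : t₀ ∈ Set.Icc 0 T)
    (hmono : ∀ τ ∈ Set.Icc 0 T, StrictMonoOn (fun t => a t τ) (Set.Icc 0 T))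
    (hcomp : ∀ ε > 0, ∃ δ > 0, ∀ s t τ τ' : ℝ, s ∈ Set.Icc 0 T → t ∈ Set.Icc 0 T →
      τ ∈ Set.Icc 0 T → τ' ∈ Set.Icc 0 T → s < t → t - s < δ → |τ - τ'| < δ →
      1 - ε < (a t τ - a s τ) / (a t τ' - a s τ') ∧
        (a t τ - a s τ) / (a t τ' - a s τ') < 1 + ε)
    (hc : ∀ t ∈ Set.Icc 0 T, ∀ ε > 0, ∃ δ > 0, ∀ P : TimePartition t,
      P.mesh < δ → |psum a P - c t| < ε)
    {ε : ℝ} (hε : 0 < ε) :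
    ∃ δ > 0, ∀ u v : ℝ, 0 ≤ u → v ≤ T → u < v → v - u < δ → |u - t₀| < δ → |v - t₀| < δ →
      (1 - ε) * (a v t₀ - a u t₀) ≤ c v - c u ∧
        c v - c u ≤ (1 + ε) * (a v t₀ - a u t₀) := by
  obtain ⟨δ, hδ, H⟩ := hcomp ε hε
  refine ⟨δ, hδ, fun u v hu hv huv hvu hut hvt => ?_⟩
  have main : ∀ η > 0, (1 - ε) * (a v t₀ - a u t₀) - η ≤ c v - c u ∧
      c v - c u - η ≤ (1 + ε) * (a v t₀ - a u t₀) := by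
    intro η hη
    obtain ⟨N, q, hq0, hqN, hqm, hqs, hSS⟩ := fine_sum_exists T a c hc hu huv hv hη hδ
    have hmem : ∀ i ≤ N, u ≤ q i ∧ q i ≤ v := fun i hi =>
      ⟨hq0 ▸ part_mem hqm 0 i (Nat.zero_le i) hi, hqN ▸ part_mem hqm i N hi le_rfl⟩
    have hterm : ∀ i ∈ Finset.range N,
        (1 - ε) * (a (q (i + 1)) t₀ - a (q i) t₀) ≤ a (q (i + 1)) (q i) - a (q i) (q i) ∧
        a (q (i + 1)) (q i) - a (q i) (q i) ≤ (1 + ε) * (a (q (i + 1)) t₀ - a (q i) t₀) := by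
      intro i hi
      have hi' := Finset.mem_range.mp hi
      obtain ⟨hui, hiv⟩ := hmem i hi'.le
      obtain ⟨hui', hiv'⟩ := hmem (i + 1) hi'
      have hsmem : q i ∈ Set.Icc (0 : ℝ) T := ⟨le_trans hu hui, le_trans hiv hv⟩
      have htmem : q (i + 1) ∈ Set.Icc (0 : ℝ) T := ⟨le_trans hu hui', le_trans hiv' hv⟩
      have hττ : |q i - t₀| < δ := by
        rw [abs_lt] at hut hvt ⊢
        constructor <;> linarith [hut.1, hut.2, hvt.1, hvt.2]
      have hD : 0 < a (q (i + 1)) t₀ - a (q i) t₀ :=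
        sub_pos.mpr (hmono t₀ ht₀ hsmem htmem (hqm i hi'))
      obtain ⟨hr1, hr2⟩ := H (q i) (q (i + 1)) (q i) t₀ hsmem htmem hsmem ht₀
        (hqm i hi') (hqs i hi') hττ
      constructor
      · have := (lt_div_iff₀ hD).mp hr1; linarith
      · have := (div_lt_iff₀ hD).mp hr2; linarith
    have htel : ∑ i ∈ Finset.range N, (a (q (i + 1)) t₀ - a (q i) t₀)
        = a v t₀ - a u t₀ := by
      rw [Finset.sum_range_sub (fun i => a (q i) t₀), hq0, hqN]
    have hlow : (1 - ε) * (a v t₀ - a u t₀)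
        ≤ ∑ i ∈ Finset.range N, (a (q (i + 1)) (q i) - a (q i) (q i)) := by
      calc (1 - ε) * (a v t₀ - a u t₀)
          = ∑ i ∈ Finset.range N, (1 - ε) * (a (q (i + 1)) t₀ - a (q i) t₀) := by
            rw [← Finset.mul_sum, htel]
        _ ≤ _ := Finset.sum_le_sum fun i hi => (hterm i hi).1
    have hhigh : (∑ i ∈ Finset.range N, (a (q (i + 1)) (q i) - a (q i) (q i)))
        ≤ (1 + ε) * (a v t₀ - a u t₀) := by
      calc (∑ i ∈ Finset.range N, (a (q (i + 1)) (q i) - a (q i) (q i)))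
          ≤ ∑ i ∈ Finset.range N, (1 + ε) * (a (q (i + 1)) t₀ - a (q i) t₀) :=
            Finset.sum_le_sum fun i hi => (hterm i hi).2
        _ = _ := by rw [← Finset.mul_sum, htel]
    rw [abs_lt] at hSS
    constructor <;> linarith [hSS.1, hSS.2]
  exact ⟨le_of_forall_sub_le fun η hη => (main η hη).1,
    le_of_forall_sub_le fun η hη => (main η hη).2⟩

lemma final_step {ε ε' M A C d c' : ℝ} (hM : M = |c'| + 1) (hε : 0 < ε) (hε' : 0 < ε')
    (hε2 : ε ≤ 1 / 2) (hεM : ε ≤ ε' / (4 * M)) (hd : 0 < d) (hA : 0 < A)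
    (h1 : (1 - ε) * A ≤ C) (h2 : C ≤ (1 + ε) * A)
    (hC : |C / d - c'| < min (ε' / 2) 1) : |A / d - c'| < ε' := by
  have hM0 : 0 < M := by rw [hM]; positivity
  have hC0 : 0 < C := by nlinarith
  have hCd1 : C / d - c' < 1 :=
    lt_of_le_of_lt (le_abs_self _) (lt_of_lt_of_le hC (min_le_right _ _))
  have hCdM : C / d < M := by
    have : c' ≤ |c'| := le_abs_self c'
    rw [hM]; linarith
  have hCd0 : 0 < C / d := div_pos hC0 hd
  have hAC : |A - C| ≤ ε * A := by
    rw [abs_le]; constructor <;> nlinarith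
  have hACd : |A / d - C / d| ≤ ε * A / d := by
    rw [div_sub_div_same, abs_div, abs_of_pos hd]
    gcongr
  have hA2C : A ≤ 2 * C := by nlinarith
  have h5 : ε * A ≤ 2 * ε * C := by nlinarith
  have h6 : ε * A / d ≤ 2 * ε * C / d := by gcongr
  have h7 : 2 * ε * C / d = 2 * ε * (C / d) := by ring
  have h8 : 2 * ε * (C / d) ≤ 2 * ε * M := by nlinarith
  have h9 : ε * (4 * M) ≤ ε' := (le_div_iff₀ (by positivity)).mp hεM
  have h10 : |A / d - c'| ≤ |A / d - C / d| + |C / d - c'| := abs_sub_le _ _ _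
  have h11 : |C / d - c'| < ε' / 2 := lt_of_lt_of_le hC (min_le_left _ _)
  nlinarith [h6, h7, h8]

/-- If a(t,τ) is strictly increasing in t, satisfies the comparability
hypothesis, and both c(t) = lim_{|Z|→0} S(t,Z) and t ↦ a(t,t) are differentiable at t₀,
then λ(t₀) = lim_{t→t₀} (a(t,t₀) − a(t₀,t₀))/(t − t₀) exists and equals c'(t₀). -/
theorem lambda_exists_of_differentiable (T : ℝ) (hT : 0 < T)
    (a : ℝ → ℝ → ℝ) (c : ℝ → ℝ) (t₀ : ℝ) (ht₀ : t₀ ∈ Set.Icc 0 T)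
    (hmono : ∀ τ ∈ Set.Icc 0 T, StrictMonoOn (fun t => a t τ) (Set.Icc 0 T))
    (hcomp : ∀ ε > 0, ∃ δ > 0, ∀ s t τ τ' : ℝ, s ∈ Set.Icc 0 T → t ∈ Set.Icc 0 T →
      τ ∈ Set.Icc 0 T → τ' ∈ Set.Icc 0 T → s < t → t - s < δ → |τ - τ'| < δ →
      1 - ε < (a t τ - a s τ) / (a t τ' - a s τ') ∧
        (a t τ - a s τ) / (a t τ' - a s τ') < 1 + ε)
    (hc : ∀ t ∈ Set.Icc 0 T, ∀ ε > 0, ∃ δ > 0, ∀ P : TimePartition t,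
      P.mesh < δ → |psum a P - c t| < ε)
    (c' b' : ℝ)
    (hc' : HasDerivWithinAt c c' (Set.Icc 0 T) t₀)
    (hb' : HasDerivWithinAt (fun t => a t t) b' (Set.Icc 0 T) t₀) :
    Filter.Tendsto (fun t => (a t t₀ - a t₀ t₀) / (t - t₀))
      (nhdsWithin t₀ (Set.Icc 0 T \ {t₀})) (nhds c') := by
  rw [Metric.tendsto_nhdsWithin_nhds]
  intro ε' hε'
  set M : ℝ := |c'| + 1 with hM
  have hM0 : 0 < M := by rw [hM]; positivity
  set ε : ℝ := min (1 / 2) (ε' / (4 * M)) with hεdef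
  have hε : 0 < ε := lt_min (by norm_num) (by positivity)
  have hε2 : ε ≤ 1 / 2 := min_le_left _ _
  have hεM : ε ≤ ε' / (4 * M) := min_le_right _ _
  obtain ⟨δ₁, hδ₁, key⟩ := key_estimate T a c t₀ ht₀ hmono hcomp hc hε
  have hslope : Filter.Tendsto (slope c t₀) (nhdsWithin t₀ (Set.Icc 0 T \ {t₀}))
      (nhds c') := hasDerivWithinAt_iff_tendsto_slope.mp hc'
  rw [Metric.tendsto_nhdsWithin_nhds] at hslope
  obtain ⟨δ₂, hδ₂, hs⟩ := hslope (min (ε' / 2) 1) (lt_min (by linarith) one_pos)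
  refine ⟨min δ₁ δ₂, lt_min hδ₁ hδ₂, ?_⟩
  intro t ht hdist
  obtain ⟨htI, htne⟩ := ht
  have htne' : t ≠ t₀ := by simpa using htne
  have hd1 : |t - t₀| < δ₁ :=
    lt_of_lt_of_le (by rwa [Real.dist_eq] at hdist) (min_le_left _ _)
  have hsl := hs ⟨htI, htne⟩ (lt_of_lt_of_le hdist (min_le_right _ _))
  rw [slope_def_field, Real.dist_eq] at hsl
  rw [Real.dist_eq]
  have habs := abs_lt.mp hd1
  rcases lt_or_gt_of_ne htne' with hlt | hgt
  · -- t < t₀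
    obtain ⟨h1, h2⟩ := key t t₀ htI.1 ht₀.2 hlt (by linarith [habs.1]) hd1
      (by simpa using hδ₁)
    have hA : 0 < a t₀ t₀ - a t t₀ :=
      sub_pos.mpr (hmono t₀ ht₀ htI ht₀ hlt)
    have heq1 : (a t t₀ - a t₀ t₀) / (t - t₀) = (a t₀ t₀ - a t t₀) / (t₀ - t) := by
      rw [← neg_div_neg_eq, neg_sub, neg_sub]
    have heq2 : (c t - c t₀) / (t - t₀) = (c t₀ - c t) / (t₀ - t) := by
      rw [← neg_div_neg_eq, neg_sub, neg_sub]
    rw [heq2] at hsl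
    rw [heq1]
    exact final_step hM hε hε' hε2 hεM (by linarith) hA h1 h2 hsl
  · -- t₀ < t
    obtain ⟨h1, h2⟩ := key t₀ t ht₀.1 htI.2 hgt (by linarith [habs.2])
      (by simpa using hδ₁) hd1
    have hA : 0 < a t t₀ - a t₀ t₀ :=
      sub_pos.mpr (hmono t₀ ht₀ ht₀ htI hgt)
    exact final_step hM hε hε' hε2 hεM (by linarith) hA h1 h2 hsl
end

section
/- Let (f_n) be a sequence of injective holomorphic functions on domains Ω_n ⊆ ℂ with 0 ∈ Ω_n, f_n(0) = 0, f_n'(0) ≥ 1 for all n, and suppose f_n converges locally uniformly (in the dynamic-domain sense) on (Ω_n) to a holomorphic function f on the kernel Ω of the sequence. Then f is nonconstant and injective on Ω. -/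
open Set Metric Filter Topology

/-- A locally uniform limit (on dynamic domains with kernel Ω) of injective
holomorphic maps fₙ with fₙ(0) = 0 and fₙ'(0) ≥ 1 is nonconstant and injective on Ω. -/
theorem limit_injective (Ω : Set ℂ) (Ωn : ℕ → Set ℂ) (hΩ : IsOpen Ω)
    (hconn : IsConnected Ω) (h0 : (0:ℂ) ∈ Ω)
    (hΩn : ∀ n, IsOpen (Ωn n)) (h0n : ∀ n, (0:ℂ) ∈ Ωn n)
    (hker : ∀ K : Set ℂ, IsCompact K → K ⊆ Ω → ∃ n₀, ∀ n ≥ n₀, K ⊆ Ωn n)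
    (fn : ℕ → ℂ → ℂ) (f : ℂ → ℂ)
    (hfn : ∀ n, DifferentiableOn ℂ (fn n) (Ωn n))
    (hinj : ∀ n, Set.InjOn (fn n) (Ωn n))
    (hfn0 : ∀ n, fn n 0 = 0)
    (hder : ∀ n, 1 ≤ (deriv (fn n) 0).re)
    (hf : DifferentiableOn ℂ f Ω)
    (hconv : ∀ K : Set ℂ, IsCompact K → K ⊆ Ω → ∀ ε > 0, ∃ n₀, ∀ n ≥ n₀,
      ∀ z ∈ K, ‖fn n z - f z‖ < ε) :
    (¬ ∃ w : ℂ, ∀ z ∈ Ω, f z = w) ∧ Set.InjOn f Ω := by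
  -- a closed ball around 0 inside Ω
  obtain ⟨r₀, hr₀, hball₀⟩ : ∃ r > 0, closedBall (0:ℂ) r ⊆ Ω := by
    rcases Metric.mem_nhds_iff.mp (hΩ.mem_nhds h0) with ⟨ε, hε, hsub⟩
    exact ⟨ε/2, by positivity, fun z hz => hsub <| mem_ball.mpr <|
      lt_of_le_of_lt (mem_closedBall.mp hz) (by linarith)⟩
  -- derivatives at 0 converge
  have hd0 : Tendsto (fun n => deriv (fn n) 0) atTop (𝓝 (deriv f 0)) := by
    rw [Metric.tendsto_atTop]
    intro ε hε
    obtain ⟨n₁, hn₁⟩ := hker (closedBall 0 r₀) (isCompact_closedBall 0 r₀) hball₀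
    obtain ⟨n₂, hn₂⟩ := hconv (closedBall 0 r₀) (isCompact_closedBall 0 r₀) hball₀
      (ε * r₀ / 2) (by positivity)
    refine ⟨max n₁ n₂, fun n hn => ?_⟩
    have hb1 : closedBall (0:ℂ) r₀ ⊆ Ωn n := hn₁ n (le_trans (le_max_left _ _) hn)
    have hterm : ∀ z ∈ closedBall (0:ℂ) r₀, ‖fn n z - f z‖ < ε * r₀ / 2 :=
      fun z hz => hn₂ n (le_trans (le_max_right _ _) hn) z hz
    have e1 : Complex.cderiv r₀ (fn n) 0 = deriv (fn n) 0 :=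
      Complex.cderiv_eq_deriv (hΩn n) (hfn n) hr₀ hb1
    have e2 : Complex.cderiv r₀ f 0 = deriv f 0 :=
      Complex.cderiv_eq_deriv hΩ hf hr₀ hball₀
    have hsph : sphere (0:ℂ) r₀ ⊆ closedBall (0:ℂ) r₀ := sphere_subset_closedBall
    have hlt : ‖Complex.cderiv r₀ (fn n) 0 - Complex.cderiv r₀ f 0‖ < (ε * r₀ / 2) / r₀ := by
      refine Complex.norm_cderiv_sub_lt hr₀ (fun w hw => ?_)
        (((hfn n).continuousOn).mono (hsph.trans hb1))
        ((hf.continuousOn).mono (hsph.trans hball₀))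
      simpa using hterm w (hsph hw)
    rw [dist_eq_norm, ← e1, ← e2]
    calc ‖Complex.cderiv r₀ (fn n) 0 - Complex.cderiv r₀ f 0‖ < (ε * r₀ / 2) / r₀ := hlt
      _ = ε / 2 := by field_simp
      _ < ε := by linarith
  have hre : 1 ≤ (deriv f 0).re := by
    have : Tendsto (fun n => (deriv (fn n) 0).re) atTop (𝓝 ((deriv f 0).re)) :=
      (Complex.continuous_re.tendsto _).comp hd0
    exact ge_of_tendsto' this hder
  -- nonconstancy
  have hnc : ¬ ∃ w : ℂ, ∀ z ∈ Ω, f z = w := by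
    rintro ⟨w, hw⟩
    have hev : f =ᶠ[𝓝 (0:ℂ)] fun _ => w :=
      Filter.eventually_of_mem (hΩ.mem_nhds h0) hw
    have : deriv f 0 = 0 := by rw [hev.deriv_eq, deriv_const]
    rw [this] at hre; norm_num at hre
  refine ⟨hnc, ?_⟩
  -- injectivity
  intro a ha b hb hab
  by_contra hne
  have hanal : AnalyticOnNhd ℂ f Ω := hf.analyticOnNhd hΩ
  -- f is not eventually equal to f b near b
  have hne' : ∀ᶠ z in 𝓝[≠] b, f z ≠ f b := by
    rcases ((hanal b hb).eventually_eq_or_eventually_ne analyticAt_const) with h | h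
    · exfalso
      apply hnc
      refine ⟨f b, fun z hz => ?_⟩
      exact hanal.eqOn_of_preconnected_of_eventuallyEq
        (fun z _ => analyticAt_const) hconn.isPreconnected hb h hz
    · exact h
  -- choose a suitable radius r around b
  obtain ⟨ε₁, hε₁, hε₁'⟩ : ∃ ε > 0, ∀ z ∈ ball b ε, z ≠ b → f z ≠ f b := by
    rw [eventually_nhdsWithin_iff, Metric.eventually_nhds_iff] at hne'
    obtain ⟨ε, hε, h⟩ := hne'
    exact ⟨ε, hε, fun z hz hzb => h (mem_ball.mp hz) hzb⟩
  obtain ⟨ε₂, hε₂, hε₂'⟩ : ∃ ε > 0, ball b ε ⊆ Ω :=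
    Metric.mem_nhds_iff.mp (hΩ.mem_nhds hb)
  have hdab : 0 < dist a b := dist_pos.mpr hne
  set r : ℝ := min (min ε₁ ε₂) (dist a b) / 2 with hr_def
  have hr : 0 < r := by positivity
  have hrball : closedBall b r ⊆ ball b (min ε₁ ε₂) := by
    intro z hz
    rw [mem_closedBall] at hz
    rw [mem_ball]
    have : 0 < min ε₁ ε₂ := lt_min hε₁ hε₂
    calc dist z b ≤ r := hz
      _ < min ε₁ ε₂ := by
        rw [hr_def]
        have := min_le_left (min ε₁ ε₂) (dist a b)
        linarith
  have hrΩ : closedBall b r ⊆ Ω := fun z hz =>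
    hε₂' (ball_subset_ball (min_le_right ε₁ ε₂) (hrball hz))
  have hrne : ∀ z ∈ closedBall b r, z ≠ b → f z ≠ f b := fun z hz =>
    hε₁' z (ball_subset_ball (min_le_left ε₁ ε₂) (hrball hz))
  have harb : a ∉ closedBall b r := by
    rw [mem_closedBall]
    push_neg
    have := min_le_right (min ε₁ ε₂) (dist a b)
    rw [hr_def]; linarith
  -- minimum of ‖f - f b‖ on the sphere
  have hsph_sub : sphere b r ⊆ closedBall b r := sphere_subset_closedBall
  have hsph_ne : (sphere b r).Nonempty := NormedSpace.sphere_nonempty.mpr hr.le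
  obtain ⟨z₀, hz₀, hz₀min⟩ := (isCompact_sphere b r).exists_isMinOn hsph_ne
    ((continuous_norm.comp_continuousOn
      ((hf.continuousOn.mono (hsph_sub.trans hrΩ)).sub continuousOn_const)))
  set δ : ℝ := ‖f z₀ - f b‖ with hδ_def
  have hz₀b : z₀ ≠ b := by
    intro h
    have : dist z₀ b = r := mem_sphere_iff_norm.mp hz₀ ▸ (by simpa [dist_eq_norm, h] using hz₀)
    rw [h] at this; simp at this; exact hr.ne' this.symm
  have hδ : 0 < δ := by
    rw [hδ_def, norm_pos_iff, sub_ne_zero]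
    exact hrne z₀ (hsph_sub hz₀) hz₀b
  have hδle : ∀ z ∈ sphere b r, δ ≤ ‖f z - f b‖ := fun z hz => hz₀min hz
  -- pick a large n
  set K : Set ℂ := insert a (closedBall b r) with hK_def
  have hKcomp : IsCompact K := (isCompact_closedBall b r).insert a
  have hKΩ : K ⊆ Ω := by
    rw [hK_def, insert_subset_iff]; exact ⟨ha, hrΩ⟩
  obtain ⟨n₁, hn₁⟩ := hker K hKcomp hKΩ
  obtain ⟨n₂, hn₂⟩ := hconv K hKcomp hKΩ (δ/4) (by positivity)
  set n := max n₁ n₂ with hn_def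
  have hKn : K ⊆ Ωn n := hn₁ n (le_max_left _ _)
  have hclose : ∀ z ∈ K, ‖fn n z - f z‖ < δ/4 := by
    intro z hz
    simpa using hn₂ n (le_max_right _ _) z hz
  have haK : a ∈ K := mem_insert a _
  have hbK : ∀ z ∈ closedBall b r, z ∈ K := fun z hz => mem_insert_of_mem a hz
  -- h z = fn n z - fn n a
  set g : ℂ → ℂ := fun z => fn n z - fn n a with hg_def
  have hg_ne : ∀ z ∈ closedBall b r, g z ≠ 0 := by
    intro z hz h
    have : fn n z = fn n a := by rwa [hg_def, sub_eq_zero] at h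
    have := hinj n (hKn (hbK z hz)) (hKn haK) this
    exact harb (this ▸ hz)
  -- lower bound on sphere
  have hg_lb : ∀ z ∈ sphere b r, δ/2 ≤ ‖g z‖ := by
    intro z hz
    have h1 : ‖fn n z - f z‖ < δ/4 := hclose z (hbK z (hsph_sub hz))
    have h2 : ‖fn n a - f a‖ < δ/4 := hclose a haK
    have h3 : δ ≤ ‖f z - f b‖ := hδle z hz
    have key : g z = (fn n z - f z) + (f z - f b) - (fn n a - f a) := by
      rw [hg_def]; rw [hab]; ring
    have : ‖f z - f b‖ - ‖fn n z - f z‖ - ‖fn n a - f a‖ ≤ ‖g z‖ := by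
      rw [key]
      calc ‖f z - f b‖ - ‖fn n z - f z‖ - ‖fn n a - f a‖
          ≤ ‖(fn n z - f z) + (f z - f b)‖ - ‖fn n a - f a‖ := by
            have h4 : ‖f z - f b‖ ≤ ‖(fn n z - f z) + (f z - f b)‖ + ‖fn n z - f z‖ := by
              have he : f z - f b = ((fn n z - f z) + (f z - f b)) - (fn n z - f z) := by
                ring
              have h := norm_sub_le ((fn n z - f z) + (f z - f b)) (fn n z - f z)
              rwa [← he] at h
            linarith
        _ ≤ ‖(fn n z - f z) + (f z - f b) - (fn n a - f a)‖ := by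
            have := norm_sub_norm_le ((fn n z - f z) + (f z - f b)) (fn n a - f a)
            linarith
    linarith
  -- maximum principle applied to g⁻¹ on the ball
  have hg_diff : DifferentiableOn ℂ g (closedBall b r) :=
    ((hfn n).mono (fun z hz => hKn (hbK z hz))).sub (differentiableOn_const _)
  have hginv_diff : DifferentiableOn ℂ (fun z => (g z)⁻¹) (closedBall b r) :=
    hg_diff.inv hg_ne
  have hdc : DiffContOnCl ℂ (fun z => (g z)⁻¹) (ball b r) := by
    refine DifferentiableOn.diffContOnCl ?_
    rwa [closure_ball b hr.ne']
  have hmax : ‖(g b)⁻¹‖ ≤ 2/δ := by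
    refine Complex.norm_le_of_forall_mem_frontier_norm_le isBounded_ball hdc ?_ ?_
    · intro z hz
      rw [frontier_ball b hr.ne'] at hz
      rw [norm_inv]
      have h1 : δ/2 ≤ ‖g z‖ := hg_lb z hz
      have h2 : 0 < ‖g z‖ := lt_of_lt_of_le (by positivity) h1
      rw [inv_le_comm₀ h2 (by positivity : (0:ℝ) < 2/δ)]
      calc (2/δ)⁻¹ = δ/2 := by field_simp
        _ ≤ ‖g z‖ := h1
    · rw [closure_ball b hr.ne']
      exact mem_closedBall_self hr.le
  have hgb_ne : g b ≠ 0 := hg_ne b (mem_closedBall_self hr.le)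
  have hgb_lb : δ/2 ≤ ‖g b‖ := by
    rw [norm_inv] at hmax
    have h2 : 0 < ‖g b‖ := norm_pos_iff.mpr hgb_ne
    rw [inv_le_comm₀ h2 (by positivity : (0:ℝ) < 2/δ)] at hmax
    calc δ/2 = (2/δ)⁻¹ := by field_simp
      _ ≤ ‖g b‖ := hmax
  -- upper bound: g b is small
  have hgb_ub : ‖g b‖ < δ/2 := by
    have h1 : ‖fn n b - f b‖ < δ/4 := hclose b (hbK b (mem_closedBall_self hr.le))
    have h2 : ‖fn n a - f a‖ < δ/4 := hclose a haK
    have key : g b = (fn n b - f b) - (fn n a - f a) := by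
      rw [hg_def]; rw [hab]; ring
    calc ‖g b‖ = ‖(fn n b - f b) - (fn n a - f a)‖ := by rw [key]
      _ ≤ ‖fn n b - f b‖ + ‖fn n a - f a‖ := norm_sub_le _ _
      _ < δ/4 + δ/4 := by linarith
      _ = δ/2 := by ring
  linarith
end
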